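/- The coupling map Ψ_O for the occupancy process is non-decreasing with respect to the partial order ⪯ on occupancy distributions: for all o, o' ∈ 𝒫^m_{ℓ+1} with o ⪯ o', and every r ∈ ℛ, one has Ψ_O(o,r) ⪯ Ψ_O(o',r). -/

import Mathlib

open Finset

/-- Lumped sharp peak fitness `A_H`. -/
noncomputable def AH (σ : ℝ) (b : ℕ) : ℝ := if b = 0 then σ else 1

/-- Mutation coupling map `ℳ_H(b, u₁,…,u_ℓ)`. -/
noncomputable def McoupH (κ ℓ : ℕ) (q : ℝ) (b : ℕ) (u : Fin ℓ → ℝ) : ℕ :=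
  b - (univ.filter fun k : Fin ℓ => (k : ℕ) < b ∧ u k < q / ((κ : ℝ) - 1)).card
    + (univ.filter fun k : Fin ℓ => b ≤ (k : ℕ) ∧ 1 - q < u k).card

/-- Selection map `S_O(o,s)`: the unique `l` with
`(Σ_{h<l} o(h)A_H(h))/T ≤ s < (Σ_{h≤l} o(h)A_H(h))/T`, characterized as the least `l`
such that `s·T < Σ_{h≤l} o(h)A_H(h)`. -/
noncomputable def SO (σ : ℝ) (ℓ : ℕ) (o : ℕ → ℕ) (s : ℝ) : ℕ :=
  sInf {l : ℕ |
    s * ∑ h ∈ range (ℓ + 1), (o h : ℝ) * AH σ h < ∑ h ∈ range (l + 1), (o h : ℝ) * AH σ h}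

/-- Occupancy distribution `𝒪_H(d)` of a distance vector `d`. -/
def occOf {m : ℕ} (d : Fin m → ℕ) (l : ℕ) : ℕ := (univ.filter fun i => d i = l).card

/-- Coupling map `Ψ_O` of the occupancy process. The random input `r` is a matrix in
`ℛ = [0,1)^{m×(ℓ+1)}`: column `0` drives the selection, columns `1,…,ℓ` the mutations. -/
noncomputable def PsiO (κ ℓ m : ℕ) (q σ : ℝ)
    (o : ℕ → ℕ) (r : Fin m → Fin (ℓ + 1) → ℝ) : ℕ → ℕ :=
  occOf (fun i : Fin m => McoupH κ ℓ q (SO σ ℓ o (r i 0)) (fun j => r i j.succ))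

/-- The partial order `⪯` on occupancy distributions. -/
def occLE (ℓ : ℕ) (o o' : ℕ → ℕ) : Prop :=
  ∀ l ≤ ℓ, ∑ h ∈ range (l + 1), o h ≤ ∑ h ∈ range (l + 1), o' h

noncomputable def fAux (κ ℓ : ℕ) (q : ℝ) (b : ℕ) (u : Fin ℓ → ℝ) (k : Fin ℓ) : ℕ :=
  if (k : ℕ) < b then (if u k < q / ((κ : ℝ) - 1) then 0 else 1)
  else (if 1 - q < u k then 1 else 0)

lemma card_lt_le (ℓ b : ℕ) : (univ.filter fun k : Fin ℓ => (k : ℕ) < b).card ≤ b := by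
  have := Finset.card_le_card_of_injOn (s := univ.filter fun k : Fin ℓ => (k : ℕ) < b)
    (t := range b) (fun k : Fin ℓ => (k : ℕ))
    (fun k hk => Finset.mem_range.mpr (Finset.mem_filter.mp hk).2)
    (fun a _ c _ h => Fin.ext h)
  simpa using this

lemma mcoup_eq (κ ℓ : ℕ) (q : ℝ) (b : ℕ) (u : Fin ℓ → ℝ) :
    McoupH κ ℓ q b u
      = b - (univ.filter fun k : Fin ℓ => (k : ℕ) < b).card + ∑ k, fAux κ ℓ q b u k := by
  have key : ∀ k : Fin ℓ,
      fAux κ ℓ q b u k + (if (k : ℕ) < b ∧ u k < q / ((κ : ℝ) - 1) then 1 else 0)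
        = (if (k : ℕ) < b then 1 else 0) + (if b ≤ (k : ℕ) ∧ 1 - q < u k then 1 else 0) := by
    intro k
    rcases lt_or_ge (k : ℕ) b with h | h
    · have h2 : ¬ b ≤ (k : ℕ) := by omega
      simp only [fAux, if_pos h, h2, false_and, if_false, h, true_and, add_zero]
      split_ifs <;> simp
    · have h2 : ¬ (k : ℕ) < b := by omega
      simp [fAux, h2, h]
  have hsum : (∑ k, fAux κ ℓ q b u k)
        + (univ.filter fun k : Fin ℓ => (k : ℕ) < b ∧ u k < q / ((κ : ℝ) - 1)).card
      = (univ.filter fun k : Fin ℓ => (k : ℕ) < b).card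
        + (univ.filter fun k : Fin ℓ => b ≤ (k : ℕ) ∧ 1 - q < u k).card := by
    rw [Finset.card_filter, Finset.card_filter, Finset.card_filter,
      ← Finset.sum_add_distrib, ← Finset.sum_add_distrib]
    exact Finset.sum_congr rfl fun k _ => key k
  have hle1 : (univ.filter fun k : Fin ℓ => (k : ℕ) < b ∧ u k < q / ((κ : ℝ) - 1)).card
      ≤ (univ.filter fun k : Fin ℓ => (k : ℕ) < b).card :=
    Finset.card_le_card (Finset.monotone_filter_right _ (fun k _ hk => hk.1))
  have hcb := card_lt_le ℓ b
  unfold McoupH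
  omega

lemma mcoup_mono (κ ℓ : ℕ) (q : ℝ) (hpq : q / ((κ : ℝ) - 1) < 1 - q) (u : Fin ℓ → ℝ) :
    Monotone fun b => McoupH κ ℓ q b u := by
  apply monotone_nat_of_le_succ
  intro b
  simp only [mcoup_eq]
  have h1 : (univ.filter fun k : Fin ℓ => (k : ℕ) < b + 1).card
      ≤ (univ.filter fun k : Fin ℓ => (k : ℕ) < b).card + 1 := by
    have e : (univ.filter fun k : Fin ℓ => (k : ℕ) < b + 1)
        = (univ.filter fun k : Fin ℓ => (k : ℕ) < b) ∪ (univ.filter fun k : Fin ℓ => (k : ℕ) = b) := by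
      rw [← Finset.filter_or]
      exact Finset.filter_congr fun k _ => by omega
    have hs : (univ.filter fun k : Fin ℓ => (k : ℕ) = b).card ≤ 1 := by
      apply Finset.card_le_one.mpr
      intro a ha c hc
      simp only [Finset.mem_filter] at ha hc
      exact Fin.ext (by omega)
    calc (univ.filter fun k : Fin ℓ => (k : ℕ) < b + 1).card
        ≤ _ + _ := e ▸ Finset.card_union_le _ _
      _ ≤ _ + 1 := by omega
  have h2 : ∀ k : Fin ℓ, fAux κ ℓ q b u k ≤ fAux κ ℓ q (b + 1) u k := by
    intro k
    unfold fAux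
    rcases lt_trichotomy (k : ℕ) b with h | h | h
    · simp [h, Nat.lt_succ_of_lt h]
    · have hb : ¬ (k : ℕ) < b := by omega
      have hb1 : (k : ℕ) < b + 1 := by omega
      simp only [hb, if_false, hb1, if_true]
      split_ifs with hx hy
      · exfalso; linarith
      · exact le_refl 1
      · omega
      · omega
    · have hb : ¬ (k : ℕ) < b := by omega
      have hb1 : ¬ (k : ℕ) < b + 1 := by omega
      simp [hb, hb1]
  have h3 : (∑ k, fAux κ ℓ q b u k) ≤ ∑ k, fAux κ ℓ q (b + 1) u k :=
    Finset.sum_le_sum fun k _ => h2 k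
  have hcb := card_lt_le ℓ b
  omega

lemma F_split (σ : ℝ) (o : ℕ → ℕ) (l : ℕ) :
    (∑ h ∈ range (l + 1), (o h : ℝ) * AH σ h)
      = (∑ h ∈ range (l + 1), (o h : ℝ)) + (σ - 1) * o 0 := by
  have h : ∀ h ∈ range (l + 1), (o h : ℝ) * AH σ h
      = (o h : ℝ) + (if h = 0 then (σ - 1) * (o 0 : ℝ) else 0) := by
    intro h _
    unfold AH
    split_ifs with h0
    · subst h0; ring
    · ring
  rw [Finset.sum_congr rfl h, Finset.sum_add_distrib, Finset.sum_ite_eq' (range (l + 1)) (0 : ℕ)]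
  simp

lemma SO_le (ℓ m : ℕ) (σ : ℝ) (hσ : 1 < σ) (hm : 1 ≤ m) (o o' : ℕ → ℕ)
    (ho : ∑ h ∈ range (ℓ + 1), o h = m) (ho' : ∑ h ∈ range (ℓ + 1), o' h = m)
    (hoo' : occLE ℓ o o') (s : ℝ) (hs1 : s < 1) :
    SO σ ℓ o' s ≤ SO σ ℓ o s := by
  have hc : (0 : ℝ) < σ - 1 := by linarith
  -- prefix sums as reals
  set P : (ℕ → ℕ) → ℕ → ℝ := fun o l => ((∑ h ∈ range (l + 1), o h : ℕ) : ℝ) with hP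
  have hPcast : ∀ (o : ℕ → ℕ) (l : ℕ), (∑ h ∈ range (l + 1), (o h : ℝ)) = P o l := by
    intro o l; simp [hP]
  have hFP : ∀ (o : ℕ → ℕ) (l : ℕ),
      (∑ h ∈ range (l + 1), (o h : ℝ) * AH σ h) = P o l + (σ - 1) * o 0 := by
    intro o l; rw [F_split, hPcast]
  have hPo : P o ℓ = (m : ℝ) := by simp only [hP]; exact_mod_cast ho
  have hPo' : P o' ℓ = (m : ℝ) := by simp only [hP]; exact_mod_cast ho'
  have ha : (o 0 : ℝ) ≤ (o' 0 : ℝ) := by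
    have := hoo' 0 (Nat.zero_le ℓ)
    simp only [zero_add, Finset.sum_range_one] at this
    exact_mod_cast this
  have haP : ∀ l, (o 0 : ℝ) ≤ P o l := by
    intro l
    have : o 0 ≤ ∑ h ∈ range (l + 1), o h :=
      Finset.single_le_sum (f := o) (fun i _ => Nat.zero_le _) (by simp)
    simp only [hP]; exact_mod_cast this
  have hPle : ∀ l ≤ ℓ, P o l ≤ P o' l := by
    intro l hl
    simp only [hP]; exact_mod_cast hoo' l hl
  have hPm : ∀ l ≤ ℓ, P o' l ≤ (m : ℝ) := by
    intro l hl
    rw [← ho']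
    have : (∑ h ∈ range (l + 1), o' h) ≤ ∑ h ∈ range (ℓ + 1), o' h :=
      Finset.sum_le_sum_of_subset (Finset.range_subset_range.mpr (by omega))
    simp only [hP]; exact_mod_cast this
  have hPom : ∀ l ≤ ℓ, P o l ≤ (m : ℝ) := fun l hl => (hPle l hl).trans (hPm l hl)
  have hm1 : (1 : ℝ) ≤ (m : ℝ) := by exact_mod_cast hm
  have hT : (0 : ℝ) < ∑ h ∈ range (ℓ + 1), (o h : ℝ) * AH σ h := by
    rw [hFP, hPo]
    have : (0 : ℝ) ≤ (σ - 1) * o 0 := by positivity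
    linarith
  have hT' : (0 : ℝ) < ∑ h ∈ range (ℓ + 1), (o' h : ℝ) * AH σ h := by
    rw [hFP, hPo']
    have : (0 : ℝ) ≤ (σ - 1) * o' 0 := by positivity
    linarith
  -- cross inequality
  have hcross : ∀ l ≤ ℓ,
      (∑ h ∈ range (l + 1), (o h : ℝ) * AH σ h) * (∑ h ∈ range (ℓ + 1), (o' h : ℝ) * AH σ h)
        ≤ (∑ h ∈ range (l + 1), (o' h : ℝ) * AH σ h) * (∑ h ∈ range (ℓ + 1), (o h : ℝ) * AH σ h) := by
    intro l hl
    rw [hFP, hFP, hFP, hFP, hPo, hPo']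
    have h1 := hPle l hl
    have h2 := hPm l hl
    have h3 := haP l
    have h0 : (0 : ℝ) ≤ (o 0 : ℝ) := by positivity
    nlinarith [mul_nonneg (sub_nonneg.mpr h1) (le_trans h0 (le_trans h3 (hPom l hl))),
      mul_nonneg (mul_nonneg hc.le (sub_nonneg.mpr ha)) (sub_nonneg.mpr (hPom l hl)),
      mul_nonneg (mul_nonneg hc.le h0) (sub_nonneg.mpr h1),
      mul_nonneg (sub_nonneg.mpr h1) (by linarith : (0:ℝ) ≤ (m:ℝ))]
  -- nonemptiness / membership
  have hmemℓ : ∀ oo : ℕ → ℕ, (0 : ℝ) < (∑ h ∈ range (ℓ + 1), (oo h : ℝ) * AH σ h) →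
      ℓ ∈ {l : ℕ | s * ∑ h ∈ range (ℓ + 1), (oo h : ℝ) * AH σ h
        < ∑ h ∈ range (l + 1), (oo h : ℝ) * AH σ h} := by
    intro oo hpos
    simp only [Set.mem_setOf_eq]
    nlinarith
  have hne : {l : ℕ | s * ∑ h ∈ range (ℓ + 1), (o h : ℝ) * AH σ h
      < ∑ h ∈ range (l + 1), (o h : ℝ) * AH σ h}.Nonempty := ⟨ℓ, hmemℓ o hT⟩
  have hLmem : s * ∑ h ∈ range (ℓ + 1), (o h : ℝ) * AH σ h
      < ∑ h ∈ range (SO σ ℓ o s + 1), (o h : ℝ) * AH σ h := Nat.sInf_mem hne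
  have hLle : SO σ ℓ o s ≤ ℓ := Nat.sInf_le (hmemℓ o hT)
  apply Nat.sInf_le
  simp only [Set.mem_setOf_eq]
  have hx := hcross (SO σ ℓ o s) hLle
  nlinarith [mul_lt_mul_of_pos_right hLmem hT']

lemma sum_occOf (m l : ℕ) (d : Fin m → ℕ) :
    ∑ h ∈ range (l + 1), occOf d h = (univ.filter fun i => d i ≤ l).card := by
  have h := Finset.card_eq_sum_card_fiberwise (f := d)
    (s := univ.filter fun i => d i ≤ l) (t := range (l + 1))
    (fun x hx => by
      simp only [Finset.coe_filter, Finset.mem_coe, Set.mem_setOf_eq, Finset.mem_filter, Finset.mem_range] at hx ⊢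
      omega)
  rw [h]
  apply Finset.sum_congr rfl
  intro h hh
  simp only [Finset.mem_range] at hh
  rw [occOf, Finset.filter_filter]
  congr 1
  apply Finset.filter_congr
  intro i _
  omega

/-- The coupling map `Ψ_O` of the occupancy process is non-decreasing with respect
to the partial order `⪯` on occupancy distributions. -/
theorem PsiO_monotone (κ ℓ m : ℕ) (hκ : 2 ≤ κ) (hℓ : 1 ≤ ℓ) (hm : 1 ≤ m)
    (q σ : ℝ) (hq0 : 0 < q) (hq1 : q < 1 - 1 / κ) (hσ : 1 < σ)
    (o o' : ℕ → ℕ)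
    (hov : ∀ h, ℓ < h → o h = 0) (ho'v : ∀ h, ℓ < h → o' h = 0)
    (ho : ∑ h ∈ range (ℓ + 1), o h = m) (ho' : ∑ h ∈ range (ℓ + 1), o' h = m)
    (hoo' : occLE ℓ o o')
    (r : Fin m → Fin (ℓ + 1) → ℝ) (hr : ∀ i j, 0 ≤ r i j ∧ r i j < 1) :
    occLE ℓ (PsiO κ ℓ m q σ o r) (PsiO κ ℓ m q σ o' r) := by
  have hpq : q / ((κ : ℝ) - 1) < 1 - q := by
    have hκR : (2 : ℝ) ≤ (κ : ℝ) := by exact_mod_cast hκ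
    have h1 : (0 : ℝ) < (κ : ℝ) - 1 := by linarith
    rw [div_lt_iff₀ h1]
    have h3 : (1 : ℝ) / κ * κ = 1 := by field_simp
    nlinarith [mul_lt_mul_of_pos_right hq1 (by linarith : (0 : ℝ) < (κ : ℝ))]
  intro l hl
  rw [PsiO, PsiO, sum_occOf, sum_occOf]
  apply Finset.card_le_card
  intro i hi
  simp only [Finset.mem_filter, Finset.mem_univ, true_and] at hi ⊢
  refine le_trans ?_ hi
  exact mcoup_mono κ ℓ q hpq (fun j => r i j.succ)
    (SO_le ℓ m σ hσ hm o o' ho ho' hoo' (r i 0) (hr i 0).2)
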